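/- The set of weakly beta-normalizing terms is closed under ≻: if s is weakly beta-normalizing and s ≻ t, then t is weakly beta-normalizing. -/

import Mathlib

namespace CondConf

/-- Untyped lambda-terms with constants from `F`, in de Bruijn notation. -/
inductive Tm (F : Type) : Type
  | const : F → Tm F
  | var   : ℕ → Tm F
  | app   : Tm F → Tm F → Tm F
  | lam   : Tm F → Tm F

namespace Tm

variable {F : Type}

/-- Lift (shift) free de Bruijn indices `≥ d` by one. -/
def lift (d : ℕ) : Tm F → Tm F
  | const f => const f
  | var n   => if n < d then var n else var (n + 1)
  | app s t => app (lift d s) (lift d t)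
  | lam s   => lam (lift (d + 1) s)

/-- Capture-avoiding substitution `t[k := u]` (de Bruijn). -/
def subst : Tm F → ℕ → Tm F → Tm F
  | const f, _, _ => const f
  | var n, k, u   => if n = k then u else if k < n then var (n - 1) else var n
  | app s t, k, u => app (subst s k u) (subst t k u)
  | lam s, k, u   => lam (subst s (k + 1) (lift 0 u))

end Tm

/-- Capture-avoiding application of a substitution `σ` to a term. -/
def applySubst {F : Type} (σ : ℕ → Tm F) : Tm F → Tm F
  | .const f => .const f
  | .var n   => σ n
  | .app s t => .app (applySubst σ s) (applySubst σ t)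
  | .lam s   => .lam (applySubst (fun n => match n with
      | 0 => Tm.var 0
      | m + 1 => Tm.lift 0 (σ m)) s)

/-- One-step beta-reduction. -/
inductive Beta {F : Type} : Tm F → Tm F → Prop
  | beta (s t : Tm F) : Beta (Tm.app (Tm.lam s) t) (Tm.subst s 0 t)
  | appL {s s'} (t) : Beta s s' → Beta (Tm.app s t) (Tm.app s' t)
  | appR (s) {t t'} : Beta t t' → Beta (Tm.app s t) (Tm.app s t')
  | lam {s s'} : Beta s s' → Beta (Tm.lam s) (Tm.lam s')

/-- Tait–Martin-Löf parallel beta-reduction. -/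
inductive PB {F : Type} : Tm F → Tm F → Prop
  | refl (t : Tm F) : PB t t
  | lam {s s'} : PB s s' → PB (Tm.lam s) (Tm.lam s')
  | app {s s' t t'} : PB s s' → PB t t' → PB (Tm.app s t) (Tm.app s' t')
  | beta {s s' t t'} : PB s s' → PB t t' →
      PB (Tm.app (Tm.lam s) t) (Tm.subst s' 0 t')


/-- One-step head beta-reduction: contracts the head redex
`λx⃗.(λy.b) a₀ a⃗ →h λx⃗.b[y:=a₀] a⃗`. -/
inductive Head {F : Type} : Tm F → Tm F → Prop
  | beta (s t : Tm F) : Head (Tm.app (Tm.lam s) t) (Tm.subst s 0 t)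
  | app {s s'} (t) : Head s s' → (∀ b : Tm F, s ≠ Tm.lam b) →
      Head (Tm.app s t) (Tm.app s' t)
  | lam {s s'} : Head s s' → Head (Tm.lam s) (Tm.lam s')

/-- Head of the application spine. -/
def spineHead {F : Type} : Tm F → Tm F
  | .app s _ => spineHead s
  | t => t

/-- Arguments of the application spine. -/
def spineArgs {F : Type} : Tm F → List (Tm F)
  | .app s t => spineArgs s ++ [t]
  | _ => []

/-- Strip the outer abstractions `λx⃗`. -/
def stripLam {F : Type} : Tm F → Tm F
  | .lam s => stripLam s
  | t => t

/-- `t'` is obtained from `t` by renaming its (de Bruijn) variables; this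
accounts for the fact that the free variables of an argument may be bound in
the surrounding term (e.g. `λx. f x ≻ y` for every variable `y`). -/
def Renaming {F : Type} (t t' : Tm F) : Prop :=
  ∃ ρ : ℕ → ℕ, t' = applySubst (fun n => Tm.var (ρ n)) t

/-- The relation `≻`: either a head beta-step, or passing (up to renaming of
variables) to one of the arguments `aᵢ` of `s = λx⃗. v a₀ … aₙ` where the head
`v` is a variable or a constant and there is at least one argument. -/
inductive Succ {F : Type} : Tm F → Tm F → Prop
  | head {s t : Tm F} : Head s t → Succ s t
  | arg {s a t : Tm F} :
      ((∃ n : ℕ, spineHead (stripLam s) = Tm.var n) ∨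
        (∃ f : F, spineHead (stripLam s) = Tm.const f)) →
      a ∈ spineArgs (stripLam s) →
      1 ≤ (spineArgs (stripLam s)).length →
      Renaming a t → Succ s t

/-- Beta-normal forms. -/
def BetaNF {F : Type} (t : Tm F) : Prop := ∀ u : Tm F, ¬ Beta t u

/-- Weakly beta-normalizing terms: terms having a beta-normal form. -/
def WN {F : Type} (s : Tm F) : Prop :=
  ∃ t : Tm F, Relation.ReflTransGen Beta s t ∧ BetaNF t

open Tm

variable {F : Type}

theorem lift_var (d n : ℕ) :
    (lift d (var n) : Tm F) = if n < d then var n else var (n+1) := rfl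

theorem subst_var (n k : ℕ) (u : Tm F) :
    subst (var n) k u = if n = k then u else if k < n then var (n-1) else var n := rfl

attribute [local simp] Tm.lift Tm.subst

theorem lift_lift (t : Tm F) : ∀ {i j : ℕ}, i ≤ j →
    lift i (lift j t) = lift (j+1) (lift i t) := by
  induction t with
  | const f => intro i j h; simp
  | var n =>
    intro i j h
    simp only [lift_var]
    split_ifs with h1 h2 <;> simp only [lift_var] <;> split_ifs <;>
      first | rfl | omega | (exfalso; omega) | (congr 1; omega)
  | app s t ihs iht => intro i j h; simp [ihs h, iht h]
  | lam s ih =>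
    intro i j h
    simp only [lift]
    rw [ih (by omega)]

theorem subst_lift_cancel (u : Tm F) : ∀ (k : ℕ) (w : Tm F),
    subst (lift k u) k w = u := by
  induction u with
  | const f => intro k w; simp
  | var n =>
    intro k w
    simp only [lift_var]
    split_ifs with h1 <;> simp only [subst_var] <;> split_ifs <;>
      first | rfl | omega | (exfalso; omega) | (congr 1; omega)
  | app s t ihs iht => intro k w; simp [ihs, iht]
  | lam s ih => intro k w; simp [ih]

theorem lift_subst_le (s : Tm F) : ∀ (u : Tm F) {k d : ℕ}, k ≤ d →
    lift d (subst s k u) = subst (lift (d+1) s) k (lift d u) := by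
  induction s with
  | const f => intro u k d h; simp
  | var n =>
    intro u k d h
    simp only [subst_var, lift_var]
    split_ifs <;> simp only [subst_var, lift_var] <;> split_ifs <;>
      first | rfl | omega | (exfalso; omega) | (congr 1; omega)
  | app s t ihs iht => intro u k d h; simp [ihs u h, iht u h]
  | lam s ih =>
    intro u k d h
    simp only [lift, subst]
    rw [ih (lift 0 u) (by omega : k+1 ≤ d+1), lift_lift u (by omega : 0 ≤ d)]

theorem lift_subst_ge (t : Tm F) : ∀ (u : Tm F) {d k : ℕ}, d ≤ k →
    lift d (subst t k u) = subst (lift d t) (k+1) (lift d u) := by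
  induction t with
  | const f => intro u d k h; simp
  | var n =>
    intro u d k h
    simp only [subst_var, lift_var]
    split_ifs <;> simp only [subst_var, lift_var] <;> split_ifs <;>
      first | rfl | omega | (exfalso; omega) | (congr 1; omega)
  | app s t ihs iht => intro u d k h; simp [ihs u h, iht u h]
  | lam s ih =>
    intro u d k h
    simp only [lift, subst]
    rw [ih (lift 0 u) (by omega : d+1 ≤ k+1), lift_lift u (by omega : 0 ≤ d)]

theorem subst_subst (s : Tm F) : ∀ (t u : Tm F) {j k : ℕ}, j ≤ k →
    subst (subst s j t) k u = subst (subst s (k+1) (lift j u)) j (subst t k u) := by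
  induction s with
  | const f => intro t u j k h; simp
  | var n =>
    intro t u j k h
    simp only [subst_var]
    split_ifs <;> (try rw [subst_lift_cancel]) <;> (try simp only [subst_var]) <;>
      (try split_ifs) <;>
      first | rfl | (exfalso; omega) | (congr 1; omega)
  | app s1 s2 ih1 ih2 => intro t u j k h; simp [ih1 t u h, ih2 t u h]
  | lam s ih =>
    intro t u j k h
    simp only [subst]
    rw [ih (lift 0 t) (lift 0 u) (by omega : j+1 ≤ k+1),
      lift_lift u (by omega : 0 ≤ j),
      lift_subst_ge t (u) (by omega : 0 ≤ k)]

theorem PB.lift_pb {s t : Tm F} (h : PB s t) : ∀ d, PB (lift d s) (lift d t) := by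
  induction h with
  | refl t => exact fun d => PB.refl _
  | lam h ih => exact fun d => PB.lam (ih (d+1))
  | app h1 h2 ih1 ih2 => exact fun d => PB.app (ih1 d) (ih2 d)
  | @beta s s' t t' h1 h2 ih1 ih2 =>
    intro d
    rw [show lift d (Tm.app (Tm.lam s) t) = Tm.app (Tm.lam (lift (d+1) s)) (lift d t) from rfl,
      lift_subst_le s' t' (Nat.zero_le d)]
    exact PB.beta (ih1 (d+1)) (ih2 d)

theorem pb_subst_right (t : Tm F) : ∀ {u u' : Tm F} (k : ℕ), PB u u' →
    PB (subst t k u) (subst t k u') := by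
  induction t with
  | const f => intro u u' k h; exact PB.refl _
  | var n =>
    intro u u' k h
    simp only [subst_var]
    split_ifs <;> first | exact h | exact PB.refl _
  | app s t ihs iht => intro u u' k h; exact PB.app (ihs k h) (iht k h)
  | lam s ih =>
    intro u u' k h
    exact PB.lam (ih (k+1) (h.lift_pb 0))

theorem PB.subst_pb {s s' : Tm F} (h : PB s s') :
    ∀ {u u' : Tm F} (k : ℕ), PB u u' → PB (subst s k u) (subst s' k u') := by
  induction h with
  | refl t => exact fun k hu => pb_subst_right t k hu
  | lam h ih => exact fun k hu => PB.lam (ih (k+1) (hu.lift_pb 0))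
  | app h1 h2 ih1 ih2 => exact fun k hu => PB.app (ih1 k hu) (ih2 k hu)
  | @beta a a' b b' h1 h2 ih1 ih2 =>
    intro u u' k hu
    rw [show subst (Tm.app (Tm.lam a) b) k u
        = Tm.app (Tm.lam (subst a (k+1) (lift 0 u))) (subst b k u) from rfl,
      subst_subst a' b' u' (Nat.zero_le k)]
    exact PB.beta (ih1 (k+1) (hu.lift_pb 0)) (ih2 k hu)

/-- Complete development. -/
def cd : Tm F → Tm F
  | .const f => .const f
  | .var n => .var n
  | .app (.lam s) t => subst (cd s) 0 (cd t)
  | .app s t => .app (cd s) (cd t)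
  | .lam s => .lam (cd s)

theorem cd_app_ne {s : Tm F} (t : Tm F) (h : ∀ b, s ≠ Tm.lam b) :
    cd (Tm.app s t) = Tm.app (cd s) (cd t) := by
  cases s with
  | const f => rfl
  | var n => rfl
  | app a b => rfl
  | lam b => exact absurd rfl (h b)

theorem pb_lam_inv {s u : Tm F} (h : PB (Tm.lam s) u) : ∃ s', u = Tm.lam s' ∧ PB s s' := by
  cases h with
  | refl => exact ⟨s, rfl, PB.refl s⟩
  | lam h => exact ⟨_, rfl, h⟩

theorem pb_cd_self (t : Tm F) : PB t (cd t) := by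
  induction t with
  | const f => exact PB.refl _
  | var n => exact PB.refl _
  | lam s ih => exact PB.lam ih
  | app s t ihs iht =>
    cases s with
    | lam b =>
      rw [show cd (Tm.app (Tm.lam b) t) = subst (cd b) 0 (cd t) from rfl]
      have hb : PB b (cd b) := by
        have h' : PB (Tm.lam b) (Tm.lam (cd b)) := ihs
        obtain ⟨c, hc, h⟩ := pb_lam_inv h'
        cases hc
        exact h
      exact PB.beta hb iht
    | const f => exact PB.app ihs iht
    | var n => exact PB.app ihs iht
    | app a b => exact PB.app ihs iht

theorem pb_cd {t u : Tm F} (h : PB t u) : PB u (cd t) := by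
  induction h with
  | refl t => exact pb_cd_self t
  | lam h ih => exact PB.lam ih
  | @app s s' t t' h1 h2 ih1 ih2 =>
    cases s with
    | lam b =>
      obtain ⟨b', rfl, hb⟩ := pb_lam_inv h1
      rw [show cd (Tm.app (Tm.lam b) t) = subst (cd b) 0 (cd t) from rfl]
      obtain ⟨c, hc, hbc⟩ := pb_lam_inv ih1
      cases hc
      exact PB.beta hbc ih2
    | const f => exact PB.app ih1 ih2
    | var n => exact PB.app ih1 ih2
    | app a b =>
      rw [cd_app_ne t (by intro c hc; cases hc)]
      exact PB.app ih1 ih2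
  | @beta a a' b b' h1 h2 ih1 ih2 =>
    rw [show cd (Tm.app (Tm.lam a) b) = subst (cd a) 0 (cd b) from rfl]
    exact ih1.subst_pb 0 ih2

theorem pb_diamond {t u v : Tm F} (h1 : PB t u) (h2 : PB t v) :
    ∃ w, PB u w ∧ PB v w :=
  ⟨cd t, pb_cd h1, pb_cd h2⟩

theorem beta_pb {s t : Tm F} (h : Beta s t) : PB s t := by
  induction h with
  | beta s t => exact PB.beta (PB.refl s) (PB.refl t)
  | appL t h ih => exact PB.app ih (PB.refl t)
  | appR s h ih => exact PB.app (PB.refl s) ih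
  | lam h ih => exact PB.lam ih

open Relation

theorem rtg_appL {s s' : Tm F} (t : Tm F) (h : ReflTransGen Beta s s') :
    ReflTransGen Beta (Tm.app s t) (Tm.app s' t) :=
  ReflTransGen.lift (fun x => Tm.app x t) (fun _ _ hb => Beta.appL t hb) _ _ h

theorem rtg_appR (s : Tm F) {t t' : Tm F} (h : ReflTransGen Beta t t') :
    ReflTransGen Beta (Tm.app s t) (Tm.app s t') :=
  ReflTransGen.lift (fun x => Tm.app s x) (fun _ _ hb => Beta.appR s hb) _ _ h

theorem rtg_lam {s s' : Tm F} (h : ReflTransGen Beta s s') :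
    ReflTransGen Beta (Tm.lam s) (Tm.lam s') :=
  ReflTransGen.lift Tm.lam (fun _ _ hb => Beta.lam hb) _ _ h

theorem pb_rtg_beta {s t : Tm F} (h : PB s t) : ReflTransGen Beta s t := by
  induction h with
  | refl t => exact ReflTransGen.refl
  | lam h ih => exact rtg_lam ih
  | app h1 h2 ih1 ih2 => exact ((rtg_appL _ ih1).trans (rtg_appR _ ih2))
  | @beta a a' b b' h1 h2 ih1 ih2 =>
    exact ((rtg_appL _ (rtg_lam ih1)).trans (rtg_appR _ ih2)).trans
      (ReflTransGen.single (Beta.beta a' b'))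

theorem rtg_pb_rtg_beta {s t : Tm F} (h : ReflTransGen PB s t) :
    ReflTransGen Beta s t := by
  induction h with
  | refl => exact ReflTransGen.refl
  | tail _ hb ih => exact ih.trans (pb_rtg_beta hb)

/-- Strip lemma for parallel reduction. -/
theorem pb_strip {s t n : Tm F} (h1 : PB s t) (h2 : ReflTransGen PB s n) :
    ∃ m, ReflTransGen PB t m ∧ PB n m := by
  induction h2 with
  | refl => exact ⟨t, ReflTransGen.refl, h1⟩
  | @tail c n hc hcn ih =>
    obtain ⟨m, htm, hcm⟩ := ih
    obtain ⟨w, hmw, hnw⟩ := pb_diamond hcm hcn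
    exact ⟨w, htm.tail hmw, hnw⟩

theorem nf_lam {s : Tm F} (h : BetaNF (Tm.lam s)) : BetaNF s :=
  fun u hu => h (Tm.lam u) (Beta.lam hu)

theorem nf_appL {s t : Tm F} (h : BetaNF (Tm.app s t)) : BetaNF s :=
  fun u hu => h (Tm.app u t) (Beta.appL t hu)

theorem nf_appR {s t : Tm F} (h : BetaNF (Tm.app s t)) : BetaNF t :=
  fun u hu => h (Tm.app s u) (Beta.appR s hu)

theorem nf_pb_eq {n m : Tm F} (hn : BetaNF n) (h : PB n m) : m = n := by
  induction h with
  | refl t => rfl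
  | lam h ih => rw [ih (nf_lam hn)]
  | app h1 h2 ih1 ih2 => rw [ih1 (nf_appL hn), ih2 (nf_appR hn)]
  | @beta a a' b b' h1 h2 ih1 ih2 =>
    exact absurd (Beta.beta a b) (hn _)

theorem wn_beta_step {s t : Tm F} (hs : WN s) (h : Beta s t) : WN t := by
  obtain ⟨n, hsn, hnf⟩ := hs
  have hsn' : ReflTransGen PB s n := ReflTransGen.mono (fun _ _ => beta_pb) _ _ hsn
  obtain ⟨m, htm, hnm⟩ := pb_strip (beta_pb h) hsn'
  rw [nf_pb_eq hnf hnm] at htm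
  exact ⟨n, rtg_pb_rtg_beta htm, hnf⟩

theorem head_beta {s t : Tm F} (h : Head s t) : Beta s t := by
  induction h with
  | beta s t => exact Beta.beta s t
  | app t h _ ih => exact Beta.appL t ih
  | lam h ih => exact Beta.lam ih

/-- Renaming as a substitution. -/
def ren (ρ : ℕ → ℕ) (t : Tm F) : Tm F := applySubst (fun n => Tm.var (ρ n)) t

/-- Lift a renaming under a binder. -/
def up (ρ : ℕ → ℕ) : ℕ → ℕ
  | 0 => 0
  | m + 1 => ρ m + 1

theorem applySubst_ext (t : Tm F) : ∀ {σ σ' : ℕ → Tm F}, (∀ n, σ n = σ' n) →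
    applySubst σ t = applySubst σ' t := by
  induction t with
  | const f => intro σ σ' h; rfl
  | var n => intro σ σ' h; exact h n
  | app s t ihs iht => intro σ σ' h; simp only [applySubst]; rw [ihs h, iht h]
  | lam s ih =>
    intro σ σ' h
    simp only [applySubst]
    congr 1
    apply ih
    intro n
    cases n with
    | zero => rfl
    | succ m => simp only [h m]

theorem ren_lam (ρ : ℕ → ℕ) (s : Tm F) :
    ren ρ (Tm.lam s) = Tm.lam (ren (up ρ) s) := by
  simp only [ren, applySubst]
  congr 1
  apply applySubst_ext
  intro n
  cases n with
  | zero => rfl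
  | succ m => simp [up, Tm.lift]

theorem upIter_lt (ρ : ℕ → ℕ) : ∀ (k n : ℕ), n < k → up^[k] ρ n = n := by
  intro k
  induction k with
  | zero => intro n h; omega
  | succ k ih =>
    intro n h
    rw [Function.iterate_succ_apply']
    cases n with
    | zero => rfl
    | succ m => simp only [up]; rw [ih m (by omega)]

theorem upIter_ge (ρ : ℕ → ℕ) : ∀ (k m : ℕ), up^[k] ρ (k + m) = ρ m + k := by
  intro k
  induction k with
  | zero => intro m; simp
  | succ k ih =>
    intro m
    rw [Function.iterate_succ_apply']
    have : k + 1 + m = (k + m) + 1 := by omega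
    rw [this]
    simp only [up]
    rw [ih m]
    omega

theorem lift_ren (u : Tm F) : ∀ (ρ : ℕ → ℕ) (d : ℕ),
    lift d (ren (up^[d] ρ) u) = ren (up^[d+1] ρ) (lift d u) := by
  induction u with
  | const f => intro ρ d; rfl
  | var n =>
    intro ρ d
    by_cases h : n < d
    · have e1 := upIter_lt ρ d n h
      have e2 := upIter_lt ρ (d+1) n (by omega)
      have e3 := upIter_lt (up ρ) d n h
      simp [ren, applySubst, lift_var, h, e1, e2, e3]
    · obtain ⟨m, rfl⟩ : ∃ m, n = d + m := ⟨n - d, by omega⟩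
      have e1 := upIter_ge ρ d m
      have e2 : up^[d+1] ρ (d + m + 1) = ρ m + (d+1) := by
        rw [show d + m + 1 = (d+1) + m from by omega, upIter_ge]
      simp only [ren, applySubst, lift_var, e1, e2, if_neg h,
        if_neg (show ¬ ρ m + d < d from by omega)]
      (all_goals congr 1) <;> omega
  | app s t ihs iht =>
    intro ρ d
    simp only [ren, applySubst, Tm.lift] at *
    rw [ihs ρ d, iht ρ d]
  | lam s ih =>
    intro ρ d
    rw [show (Tm.lift d (Tm.lam s)) = Tm.lam (lift (d+1) s) from rfl, ren_lam, ren_lam,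
      show Tm.lift d (Tm.lam (ren (up (up^[d] ρ)) s)) = Tm.lam (lift (d+1) (ren (up (up^[d] ρ)) s)) from rfl]
    congr 1
    rw [← Function.iterate_succ_apply' up d ρ, ih ρ (d+1),
      ← Function.iterate_succ_apply' up (d+1) ρ]

theorem ren_subst (s : Tm F) : ∀ (u : Tm F) (ρ : ℕ → ℕ) (k : ℕ),
    ren (up^[k] ρ) (subst s k u)
      = subst (ren (up^[k+1] ρ) s) k (ren (up^[k] ρ) u) := by
  induction s with
  | const f => intro u ρ k; rfl
  | var n =>
    intro u ρ k
    simp only [subst_var]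
    by_cases h1 : n = k
    · subst h1
      rw [if_pos rfl, show (ren (up^[n+1] ρ) (Tm.var n)) = Tm.var (up^[n+1] ρ n) from rfl,
        upIter_lt ρ (n+1) n (by omega), subst_var, if_pos rfl]
    · rw [if_neg h1]
      by_cases h2 : k < n
      · rw [if_pos h2]
        obtain ⟨m, rfl⟩ : ∃ m, n = k + 1 + m := ⟨n - k - 1, by omega⟩
        have e0 : k + 1 + m - 1 = k + m := by omega
        have e1 := upIter_ge ρ k m
        have e2 : up^[k+1] ρ (k + 1 + m) = ρ m + (k + 1) := by
          rw [show k + 1 + m = (k+1) + m from by omega, upIter_ge]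
        simp only [ren, applySubst, e0, e1, e2, subst_var,
          if_neg (show ¬ ρ m + (k+1) = k from by omega),
          if_pos (show k < ρ m + (k+1) from by omega)]
        (all_goals congr 1) <;> omega
      · rw [if_neg h2]
        have h3 : n < k := by omega
        rw [show (ren (up^[k] ρ) (Tm.var n) : Tm F) = Tm.var n from by
            simp only [ren, applySubst]; rw [upIter_lt ρ k n h3],
          show (ren (up^[k+1] ρ) (Tm.var n) : Tm F) = Tm.var n from by
            simp only [ren, applySubst]; rw [upIter_lt ρ (k+1) n (by omega)],
          subst_var, if_neg h1, if_neg h2]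
  | app a b iha ihb =>
    intro u ρ k
    simp only [ren, applySubst, Tm.subst] at *
    rw [iha u ρ k, ihb u ρ k]
  | lam a ih =>
    intro u ρ k
    rw [show subst (Tm.lam a) k u = Tm.lam (subst a (k+1) (lift 0 u)) from rfl, ren_lam, ren_lam,
      show subst (Tm.lam (ren (up (up^[k+1] ρ)) a)) k (ren (up^[k] ρ) u)
        = Tm.lam (subst (ren (up (up^[k+1] ρ)) a) (k+1) (lift 0 (ren (up^[k] ρ) u))) from rfl]
    congr 1
    rw [← Function.iterate_succ_apply' up k ρ, ih (lift 0 u) ρ (k+1),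
      ← Function.iterate_succ_apply' up (k+1) ρ]
    congr 1
    have h5 : lift 0 (ren (up^[k] ρ) u) = ren (up (up^[k] ρ)) (lift 0 u) := by
      have := lift_ren u (up^[k] ρ) 0
      simpa using this
    rw [Function.iterate_succ_apply' up k ρ]
    exact h5.symm

theorem ren_beta {s t : Tm F} (h : Beta s t) : ∀ ρ, Beta (ren ρ s) (ren ρ t) := by
  induction h with
  | beta a b =>
    intro ρ
    have : ren ρ (Tm.app (Tm.lam a) b) = Tm.app (Tm.lam (ren (up ρ) a)) (ren ρ b) := by
      rw [show ren ρ (Tm.app (Tm.lam a) b) = Tm.app (ren ρ (Tm.lam a)) (ren ρ b) from rfl, ren_lam]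
    rw [this]
    have h2 := ren_subst a b ρ 0
    simp only [Function.iterate_one, Function.iterate_zero, id] at h2
    rw [h2]
    exact Beta.beta _ _
  | appL t h ih => intro ρ; exact Beta.appL _ (ih ρ)
  | appR s h ih => intro ρ; exact Beta.appR _ (ih ρ)
  | lam h ih =>
    intro ρ
    rw [ren_lam, ren_lam]
    exact Beta.lam (ih (up ρ))

theorem beta_reflect_ren (t : Tm F) : ∀ (ρ : ℕ → ℕ) {u : Tm F},
    Beta (ren ρ t) u → ∃ u', Beta t u' := by
  induction t with
  | const f => intro ρ u h; cases h
  | var n => intro ρ u h; cases h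
  | app s t ihs iht =>
    intro ρ u h
    rw [show ren ρ (Tm.app s t) = Tm.app (ren ρ s) (ren ρ t) from rfl] at h
    generalize hq : ren ρ s = p at h
    cases h with
    | beta a b =>
      cases s with
      | const f => exact absurd hq (by simp [ren, applySubst])
      | var n => exact absurd hq (by simp [ren, applySubst])
      | app p q => exact absurd hq (by simp [ren, applySubst])
      | lam s0 => exact ⟨_, Beta.beta s0 t⟩
    | appL t' h' =>
      rw [← hq] at h'
      obtain ⟨s', hs'⟩ := ihs ρ h'
      exact ⟨Tm.app s' t, Beta.appL t hs'⟩
    | appR s' h' =>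
      obtain ⟨t', ht'⟩ := iht ρ h'
      exact ⟨Tm.app s t', Beta.appR s ht'⟩
  | lam s ih =>
    intro ρ u h
    rw [ren_lam] at h
    cases h with
    | lam h' =>
      obtain ⟨u', hu⟩ := ih (up ρ) h'
      exact ⟨Tm.lam u', Beta.lam hu⟩

theorem nf_ren {t : Tm F} (h : BetaNF t) (ρ : ℕ → ℕ) : BetaNF (ren ρ t) := by
  intro u hu
  obtain ⟨u', hu'⟩ := beta_reflect_ren t ρ hu
  exact h u' hu'

theorem wn_ren {a t : Tm F} (ha : WN a) (h : Renaming a t) : WN t := by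
  obtain ⟨ρ, rfl⟩ := h
  obtain ⟨n, han, hnf⟩ := ha
  exact ⟨ren ρ n,
    Relation.ReflTransGen.lift (ren ρ) (fun _ _ hb => ren_beta hb ρ) _ _ han,
    nf_ren hnf ρ⟩

/-- The spine head is a variable or a constant. -/
def GoodSp (s : Tm F) : Prop :=
  (∃ n : ℕ, spineHead s = Tm.var n) ∨ (∃ f : F, spineHead s = Tm.const f)

theorem spineHead_app (p q : Tm F) : spineHead (Tm.app p q) = spineHead p := rfl
theorem spineHead_lam (b : Tm F) : spineHead (Tm.lam b) = Tm.lam b := rfl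
theorem stripLam_lam (b : Tm F) : stripLam (Tm.lam b) = stripLam b := rfl
theorem stripLam_app (p q : Tm F) : stripLam (Tm.app p q) = Tm.app p q := rfl
theorem spineArgs_app (p q : Tm F) : spineArgs (Tm.app p q) = spineArgs p ++ [q] := rfl
theorem spineArgs_lam (b : Tm F) : spineArgs (Tm.lam b) = [] := rfl

theorem goodsp_lam_false {b : Tm F} (h : GoodSp (Tm.lam b)) : False := by
  rcases h with ⟨n, hn⟩ | ⟨f, hf⟩
  · rw [spineHead_lam] at hn; cases hn
  · rw [spineHead_lam] at hf; cases hf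

theorem forall₂_rtg_refl (l : List (Tm F)) :
    List.Forall₂ (Relation.ReflTransGen Beta) l l :=
  List.forall₂_same.2 fun _ _ => Relation.ReflTransGen.refl

theorem beta_spine {s u : Tm F} (h : Beta s u) (hg : GoodSp s) :
    GoodSp u ∧ List.Forall₂ (Relation.ReflTransGen Beta) (spineArgs s) (spineArgs u) := by
  induction h with
  | beta a b =>
    exfalso
    rcases hg with ⟨n, hn⟩ | ⟨f, hf⟩
    · rw [spineHead_app, spineHead_lam] at hn; cases hn
    · rw [spineHead_app, spineHead_lam] at hf; cases hf
  | @appL p p' q h ih =>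
    have hp : GoodSp p := by rwa [GoodSp, spineHead_app] at hg
    obtain ⟨hg', hF⟩ := ih hp
    refine ⟨by rwa [GoodSp, spineHead_app], ?_⟩
    rw [spineArgs_app, spineArgs_app]
    exact List.rel_append hF (forall₂_rtg_refl [q])
  | @appR p q q' h ih =>
    refine ⟨by rwa [GoodSp, spineHead_app] at hg ⊢, ?_⟩
    rw [spineArgs_app, spineArgs_app]
    exact List.rel_append (forall₂_rtg_refl _)
      (List.Forall₂.cons (Relation.ReflTransGen.single h) List.Forall₂.nil)
  | lam h ih => exact absurd hg goodsp_lam_false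

theorem beta_strip_spine {s u : Tm F} (h : Beta s u) (hg : GoodSp (stripLam s)) :
    GoodSp (stripLam u) ∧
      List.Forall₂ (Relation.ReflTransGen Beta) (spineArgs (stripLam s)) (spineArgs (stripLam u)) := by
  induction h with
  | beta a b =>
    exfalso
    rw [stripLam_app] at hg
    rcases hg with ⟨n, hn⟩ | ⟨f, hf⟩
    · rw [spineHead_app, spineHead_lam] at hn; cases hn
    · rw [spineHead_app, spineHead_lam] at hf; cases hf
  | @appL p p' q h ih =>
    rw [stripLam_app] at hg ⊢
    rw [stripLam_app]
    exact beta_spine (Beta.appL q h) hg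
  | @appR p q q' h ih =>
    rw [stripLam_app] at hg ⊢
    rw [stripLam_app]
    exact beta_spine (Beta.appR p h) hg
  | @lam a a' h ih =>
    rw [stripLam_lam] at hg ⊢
    rw [stripLam_lam]
    exact ih hg

theorem forall₂_rtg_trans : ∀ {l1 l2 l3 : List (Tm F)},
    List.Forall₂ (Relation.ReflTransGen Beta) l1 l2 →
    List.Forall₂ (Relation.ReflTransGen Beta) l2 l3 →
    List.Forall₂ (Relation.ReflTransGen Beta) l1 l3 := by
  intro l1 l2 l3 h1
  induction h1 generalizing l3 with
  | nil => intro h2; cases h2; exact List.Forall₂.nil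
  | @cons a b l1' l2' hab h ih =>
    intro h2
    cases h2 with
    | @cons b' c l2'' l3' hbc h2' => exact List.Forall₂.cons (Relation.ReflTransGen.trans hab hbc) (ih h2')

theorem rtg_strip_spine {s n : Tm F} (h : Relation.ReflTransGen Beta s n)
    (hg : GoodSp (stripLam s)) :
    GoodSp (stripLam n) ∧
      List.Forall₂ (Relation.ReflTransGen Beta) (spineArgs (stripLam s)) (spineArgs (stripLam n)) := by
  induction h with
  | refl => exact ⟨hg, forall₂_rtg_refl _⟩
  | tail _ hb ih =>
    obtain ⟨hg', hF⟩ := ih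
    obtain ⟨hg'', hF'⟩ := beta_strip_spine hb hg'
    exact ⟨hg'', forall₂_rtg_trans hF hF'⟩

theorem forall₂_mem_left {r : Tm F → Tm F → Prop} :
    ∀ {l l' : List (Tm F)}, List.Forall₂ r l l' → ∀ {a}, a ∈ l → ∃ b ∈ l', r a b := by
  intro l l' h
  induction h with
  | nil => intro a ha; cases ha
  | @cons x y l1' l2' hab h ih =>
    intro a ha
    rcases List.mem_cons.1 ha with rfl | ha'
    · exact ⟨_, List.mem_cons_self, hab⟩
    · obtain ⟨b, hb, hr⟩ := ih ha'
      exact ⟨b, List.mem_cons_of_mem _ hb, hr⟩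

theorem nf_strip {t : Tm F} (h : BetaNF t) : BetaNF (stripLam t) := by
  induction t with
  | const f => exact h
  | var n => exact h
  | app s t ihs iht => exact h
  | lam s ih => rw [stripLam_lam]; exact ih (nf_lam h)

theorem nf_spineArgs {t : Tm F} (h : BetaNF t) : ∀ a ∈ spineArgs t, BetaNF a := by
  induction t with
  | const f => intro a ha; cases ha
  | var n => intro a ha; cases ha
  | lam s ih => intro a ha; rw [spineArgs_lam] at ha; cases ha
  | app s u ihs ihu =>
    intro a ha
    rw [spineArgs_app] at ha
    rcases List.mem_append.1 ha with ha' | ha'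
    · exact ihs (nf_appL h) a ha'
    · rcases List.mem_singleton.1 ha' with rfl
      exact nf_appR h

/-- the set of weakly beta-normalizing terms is closed under
`≻`. -/
theorem wn_closed_succ {F : Type} {s t : Tm F} (hs : WN s) (h : Succ s t) :
    WN t := by
  cases h with
  | head hh => exact wn_beta_step hs (head_beta hh)
  | arg hgood hmem hlen hrenam =>
    obtain ⟨nrm, hsn, hnf⟩ := hs
    obtain ⟨hg', hF⟩ := rtg_strip_spine hsn hgood
    obtain ⟨b, hb, hab⟩ := forall₂_mem_left hF hmem
    have hbnf : BetaNF b := nf_spineArgs (nf_strip hnf) b hb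
    exact wn_ren ⟨b, hab, hbnf⟩ hrenam
end CondConf
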